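/- For every c > 1 and every ψ₁, ψ₂ with arcsin(1/c) ≤ ψ₁ < ψ₂ ≤ π − arcsin(1/c), one has ∫_{ψ₁}^{ψ₂} (1 − R⁻(c·sin ψ)²)⁻¹ dψ > ∫_{ψ₁}^{ψ₂} (R⁺(c·sin ψ)² − 1)⁻¹ dψ. (This rests on the pointwise inequality 1 − R⁻(x)² < R⁺(x)² − 1 for all x > 1.) -/

import Mathlib

open Real
open Set

noncomputable def K (R : ℝ) : ℝ := Real.exp ((R ^ 2 - 1) / 2) / R

lemma K_eq {R : ℝ} (hR : 0 < R) : K R = Real.exp ((R ^ 2 - 1) / 2 - Real.log R) := by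
  rw [K, Real.exp_sub, Real.exp_log hR]

-- strictly decreasing on (0,1]
lemma K_anti {R S : ℝ} (hR : 0 < R) (hRS : R < S) (hS : S ≤ 1) : K S < K R := by
  have hS0 : 0 < S := hR.trans hRS
  rw [K_eq hR, K_eq hS0]
  apply Real.exp_lt_exp.2
  have h1 : Real.log R - Real.log S = Real.log (R / S) := (Real.log_div hR.ne' hS0.ne').symm
  have h2 : Real.log (R / S) < R / S - 1 :=
    Real.log_lt_sub_one_of_pos (by positivity) (by
      intro h
      rw [div_eq_one_iff_eq hS0.ne'] at h
      exact absurd h (ne_of_lt hRS))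
  have key : R / S - 1 ≤ (R ^ 2 - S ^ 2) / 2 := by
    rw [div_sub_one hS0.ne', div_le_div_iff₀ hS0 two_pos]
    nlinarith [mul_nonneg (by linarith : (0:ℝ) ≤ S - R) (by nlinarith : (0:ℝ) ≤ 2 - (R + S) * S)]
  linarith

-- strictly increasing on [1,∞)
lemma K_mono {R S : ℝ} (hR : 1 ≤ R) (hRS : R < S) : K R < K S := by
  have hR0 : (0:ℝ) < R := lt_of_lt_of_le one_pos hR
  have hS0 : (0:ℝ) < S := hR0.trans hRS
  rw [K_eq hR0, K_eq hS0]
  apply Real.exp_lt_exp.2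
  have h1 : Real.log S - Real.log R = Real.log (S / R) := (Real.log_div hS0.ne' hR0.ne').symm
  have h2 : Real.log (S / R) < S / R - 1 :=
    Real.log_lt_sub_one_of_pos (by positivity) (by
      intro h
      rw [div_eq_one_iff_eq hR0.ne'] at h
      exact absurd h (ne_of_gt hRS))
  have key : S / R - 1 ≤ (S ^ 2 - R ^ 2) / 2 := by
    rw [div_sub_one hR0.ne', div_le_div_iff₀ hR0 two_pos]
    nlinarith [mul_nonneg (by linarith : (0:ℝ) ≤ S - R) (by nlinarith : (0:ℝ) ≤ (S + R) * R - 2)]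
  linarith

lemma log_ineq {a : ℝ} (h0 : 0 < a) (h1 : a < 1) :
    0 < 2 * a - 2 + Real.log (2 - a) - Real.log a := by
  set h : ℝ → ℝ := fun t => 2 * t - 2 + Real.log (2 - t) - Real.log t with hh
  have hderiv : ∀ t ∈ Ioo a 1, HasDerivAt h (2 - 1 / (2 - t) - 1 / t) t := by
    intro t ht
    have ht0 : 0 < t := h0.trans ht.1
    have ht2 : (0:ℝ) < 2 - t := by linarith [ht.2]
    have d1 : HasDerivAt (fun t : ℝ => 2 * t - 2) 2 t := by
      simpa using ((hasDerivAt_id t).const_mul (2:ℝ)).sub_const 2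
    have d2 : HasDerivAt (fun t : ℝ => Real.log (2 - t)) (-(1 / (2 - t))) t := by
      have : HasDerivAt (fun t : ℝ => 2 - t) (-1) t := by
        simpa using (hasDerivAt_id t).const_sub 2
      simpa [div_eq_mul_inv, Function.comp_def] using (Real.hasDerivAt_log ht2.ne').comp t this
    have d3 : HasDerivAt Real.log (1 / t) t := by
      simpa [one_div] using Real.hasDerivAt_log ht0.ne'
    have := (d1.add d2).sub d3
    rw [show (2:ℝ) - 1 / (2 - t) - 1 / t = 2 + -(1 / (2 - t)) - 1 / t by ring]
    exact this
  have hanti : StrictAntiOn h (Icc a 1) := by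
    apply strictAntiOn_of_deriv_neg (convex_Icc a 1)
    · apply ContinuousOn.sub
      apply ContinuousOn.add
      · exact (continuous_const.mul continuous_id).sub continuous_const |>.continuousOn
      · apply ContinuousOn.log (by fun_prop)
        intro t ht
        have h2t := ht.2
        intro hcon; linarith
      · apply ContinuousOn.log (by fun_prop)
        intro t ht
        exact (h0.trans_le ht.1).ne'
    · intro t ht
      rw [interior_Icc] at ht
      rw [(hderiv t ht).deriv]
      have ht0 : 0 < t := h0.trans ht.1
      have ht2 : (0:ℝ) < 2 - t := by linarith [ht.2]
      rw [sub_sub, sub_neg]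
      rw [div_add_div _ _ ht2.ne' ht0.ne', lt_div_iff₀ (by positivity)]
      nlinarith [mul_pos (sub_pos.2 ht.2) (sub_pos.2 ht.2)]
  have h1lt : h 1 < h a := hanti ⟨le_refl a, h1.le⟩ ⟨h1.le, le_refl 1⟩ h1
  simp only [hh] at h1lt
  norm_num at h1lt
  linarith

lemma key_pointwise {x Rm Rp : ℝ} (hx : 1 < x) (h1 : 0 < Rm) (h2 : Rm < 1) (h3 : 1 < Rp)
    (hKm : K Rm = x) (hKp : K Rp = x) : 1 - Rm ^ 2 < Rp ^ 2 - 1 := by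
  have hp0 : (0:ℝ) < Rp := lt_trans one_pos h3
  -- the relation a - log a = b - log b for a = Rm^2, b = Rp^2
  have hrel : Rm ^ 2 - Real.log (Rm ^ 2) = Rp ^ 2 - Real.log (Rp ^ 2) := by
    have e1 : Real.log (K Rm) = (Rm ^ 2 - 1) / 2 - Real.log Rm := by
      rw [K_eq h1, Real.log_exp]
    have e2 : Real.log (K Rp) = (Rp ^ 2 - 1) / 2 - Real.log Rp := by
      rw [K_eq hp0, Real.log_exp]
    rw [hKm] at e1; rw [hKp] at e2
    have lm : Real.log (Rm ^ 2) = 2 * Real.log Rm := by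
      rw [Real.log_pow]; push_cast; ring
    have lp : Real.log (Rp ^ 2) = 2 * Real.log Rp := by
      rw [Real.log_pow]; push_cast; ring
    rw [lm, lp]
    linarith [e1.symm.trans e2]
  set a := Rm ^ 2 with ha
  set b := Rp ^ 2 with hb
  have ha0 : 0 < a := by positivity
  have ha1 : a < 1 := by nlinarith
  have hb1 : 1 < b := by nlinarith
  -- suppose b ≤ 2 - a, derive contradiction
  by_contra hcon
  push_neg at hcon
  have hble : b ≤ 2 - a := by linarith
  -- ψ(2-a) < ψ(a)
  have step1 : (2 - a) - Real.log (2 - a) < a - Real.log a := by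
    have := log_ineq ha0 ha1
    linarith
  -- ψ(b) ≤ ψ(2-a)  (ψ monotone on [1,∞))
  have step2 : b - Real.log b ≤ (2 - a) - Real.log (2 - a) := by
    rcases eq_or_lt_of_le hble with h | h
    · rw [h]
    · have hb0 : (0:ℝ) < b := by linarith
      have h2a : (0:ℝ) < 2 - a := by linarith
      have hlog : Real.log ((2 - a) / b) < (2 - a) / b - 1 :=
        Real.log_lt_sub_one_of_pos (by positivity) (by
          intro hcc
          rw [div_eq_one_iff_eq hb0.ne'] at hcc
          exact absurd hcc.symm (ne_of_lt h))
      have hld : Real.log ((2 - a) / b) = Real.log (2 - a) - Real.log b :=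
        Real.log_div h2a.ne' hb0.ne'
      have hq : (2 - a) / b - 1 ≤ (2 - a) - b := by
        rw [div_sub_one hb0.ne', div_le_iff₀ hb0]
        nlinarith
      linarith
  linarith [hrel, step1, step2]

lemma bound_F {x R : ℝ} (hx : 1 < x) (h1 : 0 < R) (h2 : R < 1) (hK : K R = x) :
    (1 - R ^ 2)⁻¹ ≤ 4 / 3 + 10 * (Real.sqrt (x - 1))⁻¹ := by
  have hu0 : 0 < 1 - R ^ 2 := by nlinarith
  have hsx : 0 < Real.sqrt (x - 1) := Real.sqrt_pos.2 (by linarith)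
  rcases lt_or_ge R (1/2) with hR | hR
  · have : (1 - R ^ 2)⁻¹ ≤ 4 / 3 := by
      rw [inv_le_comm₀ hu0 (by norm_num)]
      nlinarith
    have h10 : 0 ≤ 10 * (Real.sqrt (x - 1))⁻¹ := by positivity
    linarith
  · set u := 1 - R ^ 2 with hu
    have hu34 : u ≤ 3 / 4 := by nlinarith
    set e₀ := (R ^ 2 - 1) / 2 - Real.log R with he₀
    have hxe : x = Real.exp e₀ := by rw [← hK, K_eq h1]
    have he₀pos : 0 < e₀ := by
      by_contra hcc
      push_neg at hcc
      have : Real.exp e₀ ≤ 1 := Real.exp_le_one_iff.2 hcc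
      linarith [hxe ▸ this]
    have hlogR : 1 - R⁻¹ ≤ Real.log R := Real.one_sub_inv_le_log_of_pos h1
    have he₀le : e₀ ≤ 3 * u ^ 2 := by
      have h2R : e₀ ≤ (R ^ 2 - 1) / 2 - 1 + R⁻¹ := by
        rw [he₀]; linarith
      have hinv : R⁻¹ = 1 / R := (one_div R).symm
      have key : (R ^ 2 - 1) / 2 - 1 + 1 / R ≤ 3 * u ^ 2 := by
        have hmul : R * (R ^ 2 - 1) - 2 * R + 2 ≤ 6 * R * u ^ 2 := by
          nlinarith [mul_nonneg (sq_nonneg (1 - R))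
            (show (0:ℝ) ≤ 6 * R * (1 + R) ^ 2 - (R + 2) by nlinarith)]
        have goal2 : (R ^ 2 - 1) / 2 - 1 + 1 / R = (R * (R ^ 2 - 1) - 2 * R + 2) / (2 * R) := by
          field_simp
        rw [goal2, div_le_iff₀ (by positivity)]
        linarith
      rw [hinv] at h2R
      exact h2R.trans key
    have he₀2 : e₀ ≤ 2 := by nlinarith
    have hexp2 : Real.exp e₀ ≤ Real.exp 2 := Real.exp_le_exp.2 he₀2
    have hexp2v : Real.exp 2 ≤ 7.4 := by
      have h := Real.exp_one_lt_d9
      have : Real.exp 2 = Real.exp 1 * Real.exp 1 := by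
        rw [← Real.exp_add]; norm_num
      nlinarith [Real.exp_pos 1]
    have hx1 : x - 1 ≤ e₀ * Real.exp e₀ := by
      have := Real.add_one_le_exp (-e₀)
      have hpe : 0 < Real.exp e₀ := Real.exp_pos _
      have : (1 - e₀) * Real.exp e₀ ≤ 1 := by
        rw [Real.exp_neg] at this
        calc (1 - e₀) * Real.exp e₀ ≤ (Real.exp e₀)⁻¹ * Real.exp e₀ := by
              apply mul_le_mul_of_nonneg_right (by linarith) hpe.le
          _ = 1 := inv_mul_cancel₀ hpe.ne'
      nlinarith [hxe ▸ le_refl x]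
    have hx100 : x - 1 ≤ 100 * u ^ 2 := by
      calc x - 1 ≤ e₀ * Real.exp e₀ := hx1
        _ ≤ (3 * u ^ 2) * 7.4 := by
            apply mul_le_mul he₀le (hexp2.trans hexp2v) (Real.exp_pos _).le (by positivity)
        _ ≤ 100 * u ^ 2 := by nlinarith
    have hsqrt : Real.sqrt (x - 1) ≤ 10 * u := by
      have : Real.sqrt (x - 1) ≤ Real.sqrt (100 * u ^ 2) := Real.sqrt_le_sqrt hx100
      have h2 : Real.sqrt (100 * u ^ 2) = 10 * u := by
        rw [show (100 : ℝ) * u ^ 2 = (10 * u) ^ 2 by ring, Real.sqrt_sq (by positivity)]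
      linarith [h2 ▸ this]
    have hi : (10 * u)⁻¹ ≤ (Real.sqrt (x - 1))⁻¹ := by
      apply inv_anti₀ hsx hsqrt
    have heq : u⁻¹ = 10 * (10 * u)⁻¹ := by
      field_simp
    have : u⁻¹ ≤ 10 * (Real.sqrt (x - 1))⁻¹ := by
      rw [heq]; linarith
    linarith

section SinLemmas

variable {c : ℝ} (hc : 1 < c)

lemma inv_c_mem (hc : 1 < c) : -1 ≤ 1/c ∧ 1/c ≤ 1 := by
  constructor
  · have : (0:ℝ) ≤ 1/c := by positivity
    linarith
  · rw [div_le_one (by positivity)]; linarith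

lemma arcsin_lt_pi_div_two' (hc : 1 < c) : Real.arcsin (1/c) < π/2 :=
  Real.arcsin_lt_pi_div_two.2 (by rw [div_lt_one (by positivity)]; linarith)

lemma arcsin_pos' (hc : 1 < c) : 0 < Real.arcsin (1/c) :=
  Real.arcsin_pos.2 (by positivity)

lemma sin_arcsin' (hc : 1 < c) : Real.sin (Real.arcsin (1/c)) = 1/c :=
  Real.sin_arcsin (inv_c_mem hc).1 (inv_c_mem hc).2

lemma sin_lower (hc : 1 < c) {ψ : ℝ} (hψ1 : Real.arcsin (1/c) ≤ ψ) (hψ2 : ψ ≤ π/2) :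
    (c - 1) * (ψ - Real.arcsin (1/c)) / (π/2 - Real.arcsin (1/c)) ≤ c * Real.sin ψ - 1 := by
  set a := Real.arcsin (1/c) with ha
  set L := π/2 - a with hL
  have hL0 : 0 < L := by
    rw [hL]; linarith [arcsin_lt_pi_div_two' hc]
  have ha0 : 0 ≤ a := (arcsin_pos' hc).le
  have hcc : ConcaveOn ℝ (Icc 0 π) Real.sin := strictConcaveOn_sin_Icc.concaveOn
  have hmem1 : a ∈ Icc 0 π := ⟨ha0, by linarith [Real.pi_pos]⟩
  have hmem2 : π/2 ∈ Icc 0 π := ⟨by positivity, by linarith [Real.pi_pos]⟩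
  have hα : 0 ≤ (π/2 - ψ) / L := by
    apply div_nonneg (by linarith) hL0.le
  have hβ : 0 ≤ (ψ - a) / L := by
    apply div_nonneg (by linarith) hL0.le
  have hαβ : (π/2 - ψ) / L + (ψ - a) / L = 1 := by
    rw [← add_div, div_eq_one_iff_eq hL0.ne']
    rw [hL]; ring
  have := hcc.2 hmem1 hmem2 hα hβ hαβ
  have hcomb : ((π/2 - ψ) / L) • a + ((ψ - a) / L) • (π/2) = ψ := by
    simp only [smul_eq_mul]
    rw [div_mul_eq_mul_div, div_mul_eq_mul_div, ← add_div,
      show (π/2 - ψ) * a + (ψ - a) * (π/2) = ψ * L by rw [hL]; ring,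
      mul_div_assoc, div_self hL0.ne', mul_one]
  rw [hcomb] at this
  simp only [smul_eq_mul, show Real.sin a = 1/c from sin_arcsin' hc] at this
  -- this : (π/2 - ψ)/L * (1/c) + (ψ - a)/L * sin (π/2) ≤ sin ψ
  rw [Real.sin_pi_div_two] at this
  have hc0 : (0:ℝ) < c := by linarith
  have h2 : c * ((π/2 - ψ)/L * (1/c) + (ψ - a)/L * 1) ≤ c * Real.sin ψ :=
    mul_le_mul_of_nonneg_left this hc0.le
  have h3 : c * ((π/2 - ψ)/L * (1/c) + (ψ - a)/L * 1) = (π/2 - ψ)/L + c * (ψ - a)/L := by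
    field_simp
  have h4 : (π/2 - ψ)/L + c * (ψ - a)/L - 1 = (c - 1) * (ψ - a) / L := by
    field_simp
    ring
  linarith [h4 ▸ (by linarith [h3 ▸ h2] : (π/2 - ψ)/L + c * (ψ - a)/L - 1 ≤ c * Real.sin ψ - 1)]

lemma sin_lower' (hc : 1 < c) {ψ : ℝ} (hψ1 : π/2 ≤ ψ) (hψ2 : ψ ≤ π - Real.arcsin (1/c)) :
    (c - 1) * ((π - Real.arcsin (1/c)) - ψ) / (π/2 - Real.arcsin (1/c)) ≤ c * Real.sin ψ - 1 := by
  have h := sin_lower hc (ψ := π - ψ) (by linarith) (by linarith)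
  rw [Real.sin_pi_sub] at h
  have : π - ψ - Real.arcsin (1/c) = (π - Real.arcsin (1/c)) - ψ := by ring
  rw [this] at h
  exact h

lemma sin_gt_one (hc : 1 < c) {ψ : ℝ} (hψ1 : Real.arcsin (1/c) < ψ)
    (hψ2 : ψ < π - Real.arcsin (1/c)) : 1 < c * Real.sin ψ := by
  set a := Real.arcsin (1/c) with ha
  have hL0 : 0 < π/2 - a := by linarith [arcsin_lt_pi_div_two' hc]
  rcases le_or_gt ψ (π/2) with h | h
  · have := sin_lower hc hψ1.le h
    have hp : 0 < (c - 1) * (ψ - a) / (π/2 - a) := by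
      apply div_pos (mul_pos (by linarith) (by linarith)) hL0
    linarith
  · have := sin_lower' hc h.le hψ2.le
    have hp : 0 < (c - 1) * ((π - a) - ψ) / (π/2 - a) := by
      apply div_pos (mul_pos (by linarith) (by linarith)) hL0
    linarith

end SinLemmas

lemma inv_sqrt_eq (y : ℝ) : (Real.sqrt y)⁻¹ = y ^ (-(1/2) : ℝ) := by
  rcases lt_trichotomy y 0 with h | h | h
  · rw [Real.sqrt_eq_zero_of_nonpos h.le, inv_zero, Real.rpow_def_of_neg h]
    have : Real.cos (-(1/2) * π) = 0 := by
      rw [show (-(1/2) : ℝ) * π = -(π/2) by ring, Real.cos_neg, Real.cos_pi_div_two]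
    rw [this, mul_zero]
  · subst h
    rw [Real.sqrt_zero, inv_zero, Real.zero_rpow (by norm_num)]
  · rw [Real.rpow_neg h.le, Real.sqrt_eq_rpow]

lemma int_inv_sqrt_sub (a A B : ℝ) :
    IntervalIntegrable (fun ψ => (Real.sqrt (ψ - a))⁻¹) MeasureTheory.volume A B := by
  have h : IntervalIntegrable (fun x : ℝ => x ^ (-(1/2) : ℝ)) MeasureTheory.volume (A - a) (B - a) :=
    intervalIntegral.intervalIntegrable_rpow' (r := -(1/2)) (by norm_num)
  have h2 := h.comp_sub_right a
  simp only [sub_add_cancel] at h2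
  have : (fun ψ : ℝ => (Real.sqrt (ψ - a))⁻¹) = fun x : ℝ => (x - a) ^ (-(1/2) : ℝ) := by
    funext x; exact inv_sqrt_eq _
  rw [this]
  exact h2

lemma int_inv_sqrt_sub' (b A B : ℝ) :
    IntervalIntegrable (fun ψ => (Real.sqrt (b - ψ))⁻¹) MeasureTheory.volume A B := by
  have h : IntervalIntegrable (fun x : ℝ => x ^ (-(1/2) : ℝ)) MeasureTheory.volume (b - A) (b - B) :=
    intervalIntegral.intervalIntegrable_rpow' (r := -(1/2)) (by norm_num)
  have h2 := h.comp_sub_left b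
  simp only [sub_sub_cancel] at h2
  have : (fun ψ : ℝ => (Real.sqrt (b - ψ))⁻¹) = fun x : ℝ => (b - x) ^ (-(1/2) : ℝ) := by
    funext x; exact inv_sqrt_eq _
  rw [this]
  exact h2

open MeasureTheory in
lemma integrable_comp {c : ℝ} (hc : 1 < c) {ψ₁ ψ₂ : ℝ}
    (h₁ : Real.arcsin (1/c) ≤ ψ₁) (h₁₂ : ψ₁ < ψ₂) (h₂ : ψ₂ ≤ π - Real.arcsin (1/c))
    (F : ℝ → ℝ)
    (hanti : ∀ x y : ℝ, 1 < x → x < y → F y ≤ F x)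
    (hpos : ∀ x : ℝ, 1 < x → 0 < F x)
    (hbound : ∀ x : ℝ, 1 < x → F x ≤ 4/3 + 10 * (Real.sqrt (x - 1))⁻¹) :
    IntervalIntegrable (fun ψ => F (c * Real.sin ψ)) MeasureTheory.volume ψ₁ ψ₂ := by
  set a := Real.arcsin (1/c) with ha
  set b := π - a with hb
  set L := π/2 - a with hL
  have hL0 : 0 < L := by rw [hL]; linarith [arcsin_lt_pi_div_two' hc]
  have ha0 : 0 < a := arcsin_pos' hc
  set β := (c - 1) / L with hβ
  have hβ0 : 0 < β := div_pos (by linarith) hL0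
  set g : ℝ → ℝ := fun ψ => F (c * Real.sin ψ) with hg
  set H : ℝ → ℝ := fun ψ =>
    4/3 + 10 * (Real.sqrt β)⁻¹ * ((Real.sqrt (ψ - a))⁻¹ + (Real.sqrt (b - ψ))⁻¹) with hH
  -- each ψ in the open interval gives c sin ψ > 1
  have hgt : ∀ ψ ∈ Ioo ψ₁ ψ₂, 1 < c * Real.sin ψ := fun ψ hψ =>
    sin_gt_one hc (lt_of_le_of_lt h₁ hψ.1) (lt_of_lt_of_le hψ.2 h₂)
  -- H is interval integrable
  have hHint : IntervalIntegrable H MeasureTheory.volume ψ₁ ψ₂ := by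
    apply IntervalIntegrable.add (intervalIntegrable_const)
    apply IntervalIntegrable.const_mul
    exact (int_inv_sqrt_sub a ψ₁ ψ₂).add (int_inv_sqrt_sub' b ψ₁ ψ₂)
  -- measurability of g on the open interval
  have hmeas : AEMeasurable g (MeasureTheory.volume.restrict (Ioo ψ₁ ψ₂)) := by
    have hsplit : Ioo ψ₁ ψ₂ = (Ioo ψ₁ ψ₂ ∩ Iic (π/2)) ∪ (Ioo ψ₁ ψ₂ ∩ Ici (π/2)) := by
      ext t
      simp only [Set.mem_union, Set.mem_inter_iff, Set.mem_Iic, Set.mem_Ici]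
      constructor
      · intro h; rcases le_total t (π/2) with h' | h'
        · exact Or.inl ⟨h, h'⟩
        · exact Or.inr ⟨h, h'⟩
      · rintro (⟨h, _⟩ | ⟨h, _⟩) <;> exact h
    rw [hsplit, aemeasurable_union_iff]
    constructor
    · apply aemeasurable_restrict_of_antitoneOn
        (measurableSet_Ioo.inter measurableSet_Iic)
      rintro ψ ⟨hψ, hψle⟩ ψ' ⟨hψ', hψle'⟩ hle
      rcases eq_or_lt_of_le hle with rfl | hlt
      · exact le_refl _
      · have hx1 : 1 < c * Real.sin ψ := hgt ψ hψ
        have hmono : Real.sin ψ < Real.sin ψ' := by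
          apply Real.strictMonoOn_sin
            ⟨by linarith [hψ.1, h₁, ha0, Real.pi_pos], Set.mem_Iic.1 hψle⟩
            ⟨by linarith [hψ'.1, h₁, ha0, Real.pi_pos], Set.mem_Iic.1 hψle'⟩ hlt
        exact hanti _ _ hx1 (by nlinarith)
    · apply aemeasurable_restrict_of_monotoneOn
        (measurableSet_Ioo.inter measurableSet_Ici)
      rintro ψ ⟨hψ, hψge⟩ ψ' ⟨hψ', hψge'⟩ hle
      rcases eq_or_lt_of_le hle with rfl | hlt
      · exact le_refl _
      · have hx1 : 1 < c * Real.sin ψ' := hgt ψ' hψ'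
        have hmono : Real.sin ψ' < Real.sin ψ := by
          rw [← Real.sin_pi_sub ψ, ← Real.sin_pi_sub ψ']
          apply Real.strictMonoOn_sin
            ⟨by linarith [hψ'.2, h₂, ha0, hb], by linarith [Set.mem_Ici.1 hψge']⟩
            ⟨by linarith [hψ.2, h₂, ha0, hb], by linarith [Set.mem_Ici.1 hψge]⟩ (by linarith)
        exact hanti _ _ hx1 (by nlinarith)
  -- the bound g ≤ H on the open interval
  have hle : ∀ ψ ∈ Ioo ψ₁ ψ₂, ‖g ψ‖ ≤ H ψ := by
    intro ψ hψ
    have hx1 : 1 < c * Real.sin ψ := hgt ψ hψ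
    have hnorm : ‖g ψ‖ = F (c * Real.sin ψ) := by
      rw [Real.norm_eq_abs, abs_of_pos (hpos _ hx1)]
    rw [hnorm]
    have hb1 : F (c * Real.sin ψ) ≤ 4/3 + 10 * (Real.sqrt (c * Real.sin ψ - 1))⁻¹ :=
      hbound _ hx1
    have hψa : a < ψ := lt_of_le_of_lt h₁ hψ.1
    have hψb : ψ < b := lt_of_lt_of_le hψ.2 h₂
    have hkey : (Real.sqrt (c * Real.sin ψ - 1))⁻¹ ≤
        (Real.sqrt β)⁻¹ * ((Real.sqrt (ψ - a))⁻¹ + (Real.sqrt (b - ψ))⁻¹) := by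
      have hstep : ∃ m : ℝ, 0 < m ∧ β * m ≤ c * Real.sin ψ - 1 ∧
          (Real.sqrt m)⁻¹ ≤ (Real.sqrt (ψ - a))⁻¹ + (Real.sqrt (b - ψ))⁻¹ := by
        rcases le_total ψ (π/2) with hhalf | hhalf
        · refine ⟨ψ - a, by linarith, ?_, ?_⟩
          · have h5 := sin_lower hc (show Real.arcsin (1/c) ≤ ψ by rw [← ha]; exact hψa.le) hhalf
            have heq : (c - 1) * (ψ - Real.arcsin (1/c)) / (π/2 - Real.arcsin (1/c))
                = β * (ψ - a) := by
              rw [hβ, hL, ha]; ring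
            linarith [h5, heq]
          · have h0 : (0:ℝ) ≤ (Real.sqrt (b - ψ))⁻¹ := by positivity
            linarith
        · refine ⟨b - ψ, by linarith, ?_, ?_⟩
          · have h5 := sin_lower' hc hhalf
              (show ψ ≤ π - Real.arcsin (1/c) by rw [← ha, ← hb]; exact hψb.le)
            have heq : (c - 1) * ((π - Real.arcsin (1/c)) - ψ) / (π/2 - Real.arcsin (1/c))
                = β * (b - ψ) := by
              rw [hβ, hb, hL, ha]; ring
            exact heq ▸ h5
          · have h0 : (0:ℝ) ≤ (Real.sqrt (ψ - a))⁻¹ := by positivity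
            linarith
      obtain ⟨m, hm0, hm1, hm2⟩ := hstep
      have hsm : Real.sqrt (β * m) ≤ Real.sqrt (c * Real.sin ψ - 1) := Real.sqrt_le_sqrt hm1
      have hsm0 : 0 < Real.sqrt (β * m) := Real.sqrt_pos.2 (by positivity)
      have hinv : (Real.sqrt (c * Real.sin ψ - 1))⁻¹ ≤ (Real.sqrt (β * m))⁻¹ :=
        inv_anti₀ hsm0 hsm
      rw [Real.sqrt_mul hβ0.le, mul_inv] at hinv
      calc (Real.sqrt (c * Real.sin ψ - 1))⁻¹ ≤ (Real.sqrt β)⁻¹ * (Real.sqrt m)⁻¹ := hinv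
        _ ≤ (Real.sqrt β)⁻¹ * ((Real.sqrt (ψ - a))⁻¹ + (Real.sqrt (b - ψ))⁻¹) := by
            apply mul_le_mul_of_nonneg_left hm2 (by positivity)
    calc F (c * Real.sin ψ) ≤ 4/3 + 10 * (Real.sqrt (c * Real.sin ψ - 1))⁻¹ := hb1
      _ ≤ 4/3 + 10 * ((Real.sqrt β)⁻¹ * ((Real.sqrt (ψ - a))⁻¹ + (Real.sqrt (b - ψ))⁻¹)) := by
          linarith [mul_le_mul_of_nonneg_left hkey (by norm_num : (0:ℝ) ≤ 10)]
      _ = H ψ := by rw [hH]; ring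
  -- conclude
  rw [intervalIntegrable_iff_integrableOn_Ioo_of_le h₁₂.le]
  have hHint' : IntegrableOn H (Ioo ψ₁ ψ₂) MeasureTheory.volume := by
    rw [intervalIntegrable_iff_integrableOn_Ioo_of_le h₁₂.le] at hHint
    exact hHint
  apply Integrable.mono' hHint' hmeas.aestronglyMeasurable
  rw [ae_restrict_iff' measurableSet_Ioo]
  filter_upwards with ψ hψ using hle ψ hψ

theorem stmt_1 (Rm Rp : ℝ → ℝ)
    (hRm : ∀ x : ℝ, 1 < x → 0 < Rm x ∧ Rm x < 1 ∧ K (Rm x) = x)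
    (hRp : ∀ x : ℝ, 1 < x → 1 < Rp x ∧ K (Rp x) = x)
    (c ψ₁ ψ₂ : ℝ) (hc : 1 < c)
    (h₁ : Real.arcsin (1 / c) ≤ ψ₁) (h₁₂ : ψ₁ < ψ₂)
    (h₂ : ψ₂ ≤ π - Real.arcsin (1 / c)) :
    (∫ ψ in ψ₁..ψ₂, (1 - (Rm (c * Real.sin ψ)) ^ 2)⁻¹) >
      ∫ ψ in ψ₁..ψ₂, ((Rp (c * Real.sin ψ)) ^ 2 - 1)⁻¹ := by
  have h₁' : Real.arcsin (1/c) ≤ ψ₁ := by rw [one_div]; rw [one_div] at h₁; exact h₁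
  have h₂' : ψ₂ ≤ π - Real.arcsin (1/c) := by rw [one_div]; rw [one_div] at h₂; exact h₂
  set F₁ : ℝ → ℝ := fun x => (1 - (Rm x) ^ 2)⁻¹ with hF₁
  set F₂ : ℝ → ℝ := fun x => ((Rp x) ^ 2 - 1)⁻¹ with hF₂
  -- basic facts
  have hden₁ : ∀ x : ℝ, 1 < x → 0 < 1 - (Rm x) ^ 2 := by
    intro x hx
    obtain ⟨h1, h2, _⟩ := hRm x hx
    nlinarith
  have hden₂ : ∀ x : ℝ, 1 < x → 1 - (Rm x) ^ 2 < (Rp x) ^ 2 - 1 := by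
    intro x hx
    obtain ⟨h1, h2, h3⟩ := hRm x hx
    obtain ⟨h4, h5⟩ := hRp x hx
    exact key_pointwise hx h1 h2 h4 h3 h5
  have hlt : ∀ x : ℝ, 1 < x → F₂ x < F₁ x := by
    intro x hx
    exact inv_strictAnti₀ (hden₁ x hx) (hden₂ x hx)
  have hanti₁ : ∀ x y : ℝ, 1 < x → x < y → F₁ y ≤ F₁ x := by
    intro x y hx hxy
    obtain ⟨hx1, hx2, hx3⟩ := hRm x hx
    obtain ⟨hy1, hy2, hy3⟩ := hRm y (hx.trans hxy)
    have hRmlt : Rm y < Rm x := by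
      rcases lt_trichotomy (Rm y) (Rm x) with h | h | h
      · exact h
      · exfalso; rw [h] at hy3; rw [hy3] at hx3; linarith
      · exfalso
        have := K_anti hx1 h hy2.le
        rw [hx3, hy3] at this
        linarith
    apply inv_anti₀ (hden₁ x hx)
    nlinarith
  have hanti₂ : ∀ x y : ℝ, 1 < x → x < y → F₂ y ≤ F₂ x := by
    intro x y hx hxy
    obtain ⟨hx1, hx3⟩ := hRp x hx
    obtain ⟨hy1, hy3⟩ := hRp y (hx.trans hxy)
    have hRplt : Rp x < Rp y := by
      rcases lt_trichotomy (Rp x) (Rp y) with h | h | h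
      · exact h
      · exfalso; rw [h] at hx3; rw [hx3] at hy3; linarith
      · exfalso
        have := K_mono hy1.le h
        rw [hx3, hy3] at this
        linarith
    apply inv_anti₀ (by nlinarith)
    nlinarith
  have hpos₁ : ∀ x : ℝ, 1 < x → 0 < F₁ x := fun x hx => inv_pos.2 (hden₁ x hx)
  have hpos₂ : ∀ x : ℝ, 1 < x → 0 < F₂ x := by
    intro x hx
    have := hden₁ x hx
    have := hden₂ x hx
    exact inv_pos.2 (by linarith)
  have hbound₁ : ∀ x : ℝ, 1 < x → F₁ x ≤ 4/3 + 10 * (Real.sqrt (x - 1))⁻¹ := by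
    intro x hx
    obtain ⟨h1, h2, h3⟩ := hRm x hx
    exact bound_F hx h1 h2 h3
  have hbound₂ : ∀ x : ℝ, 1 < x → F₂ x ≤ 4/3 + 10 * (Real.sqrt (x - 1))⁻¹ :=
    fun x hx => (hlt x hx).le.trans (hbound₁ x hx)
  have hint₁ : IntervalIntegrable (fun ψ => F₁ (c * Real.sin ψ)) MeasureTheory.volume ψ₁ ψ₂ :=
    integrable_comp hc h₁' h₁₂ h₂' F₁ hanti₁ hpos₁ hbound₁
  have hint₂ : IntervalIntegrable (fun ψ => F₂ (c * Real.sin ψ)) MeasureTheory.volume ψ₁ ψ₂ :=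
    integrable_comp hc h₁' h₁₂ h₂' F₂ hanti₂ hpos₂ hbound₂
  have hodiff : 0 < ∫ ψ in ψ₁..ψ₂, (F₁ (c * Real.sin ψ) - F₂ (c * Real.sin ψ)) := by
    apply intervalIntegral.intervalIntegral_pos_of_pos_on (hint₁.sub hint₂) _ h₁₂
    intro ψ hψ
    have hx : 1 < c * Real.sin ψ :=
      sin_gt_one hc (lt_of_le_of_lt h₁' hψ.1) (lt_of_lt_of_le hψ.2 h₂')
    have := hlt _ hx
    simp only [sub_pos]
    exact this
  rw [intervalIntegral.integral_sub hint₁ hint₂] at hodiff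
  rw [gt_iff_lt, ← sub_pos]
  exact hodiff
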